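/- For all integers a ≥ 0 and b ≥ 0, Σ_{j=0}^{b} C(b,j) · B̃(a + b − j) = e^{-1} · Σ_{i=0}^{∞} (i−1)^a · i^b / i!, with the convention 0^0 = 1. -/

import Mathlib

open Finset

abbrev SetPartition (n : ℕ) := Finpartition (Finset.univ : Finset (Fin n))

def IsTIntersecting (n t : ℕ) (A : Set (SetPartition n)) : Prop :=
  ∀ p ∈ A, ∀ q ∈ A, t ≤ (p.parts ∩ q.parts).card

noncomputable def M (n t : ℕ) : ℕ :=
  sSup {m : ℕ | ∃ A : Set (SetPartition n), IsTIntersecting n t A ∧ A.ncard = m}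

def IsNontrivTIntersecting (n t : ℕ) (A : Set (SetPartition n)) : Prop :=
  IsTIntersecting n t A ∧ {b : Finset (Fin n) | ∀ p ∈ A, b ∈ p.parts}.ncard < t

noncomputable def Mtilde (n t : ℕ) : ℕ :=
  sSup {m : ℕ | ∃ A : Set (SetPartition n), IsNontrivTIntersecting n t A ∧ A.ncard = m}

def fixedSet {n : ℕ} (p : SetPartition n) : Finset (Fin n) :=
  Finset.univ.filter (fun i => ({i} : Finset (Fin n)) ∈ p.parts)

noncomputable def Btilde (m : ℕ) : ℕ :=
  Nat.card {p : SetPartition m // ∀ b ∈ p.parts, b.card ≠ 1}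

noncomputable def Bell (m : ℕ) : ℕ := Nat.card (SetPartition m)

noncomputable def gammaQ (n t l : ℕ) : ℚ :=
  ((∑ i ∈ Finset.range (n - l + 2), (n - l + 1).choose i * Btilde (n - (l + t) / 2 + 1 - i) : ℕ) : ℚ) /
  ((∑ i ∈ Finset.range (n - l + 1), (n - l).choose i * Btilde (n - (l + t) / 2 - i) : ℕ) : ℚ)

noncomputable def maxCond (n t l : ℕ) : Prop :=
  ((l - t : ℕ) : ℚ) / (2 * ((l - 1 : ℕ) : ℚ)) * gammaQ n t l ≤ 1

def blockOf {n : ℕ} (p : SetPartition n) (i : Fin n) : Finset (Fin n) :=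
  (p.parts.filter (fun b => i ∈ b)).sup id

def fixParts {n : ℕ} (i j : Fin n) (p : SetPartition n) : Finset (Finset (Fin n)) :=
  if i ≠ j ∧ j ∈ blockOf p i then
    (p.parts \ {blockOf p i}) ∪ {({i} : Finset (Fin n)), blockOf p i \ {i}}
  else p.parts

def shiftParts {n : ℕ} (v w : Fin n) (p : SetPartition n) : Finset (Finset (Fin n)) :=
  if ({w} : Finset (Fin n)) ∈ p.parts ∧ ({v} : Finset (Fin n)) ∉ p.parts then
    (p.parts \ {blockOf p v, ({w} : Finset (Fin n))}) ∪
      {insert w (blockOf p v \ {v}), ({v} : Finset (Fin n))}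
  else p.parts

def FixClosed {n : ℕ} (A : Set (SetPartition n)) : Prop :=
  ∀ p ∈ A, ∀ i j : Fin n, i ≠ j → ∀ q : SetPartition n, q.parts = fixParts i j p → q ∈ A

def ShiftClosed {n : ℕ} (A : Set (SetPartition n)) : Prop :=
  ∀ p ∈ A, ∀ v w : Fin n, v < w → ∀ q : SetPartition n, q.parts = shiftParts v w p → q ∈ A

def DClosedOn {n : ℕ} (A : Set (SetPartition n)) (S : Set (Fin n)) : Prop :=
  ∀ p ∈ A, ∀ v ∈ S, ∀ w ∈ S, v ≠ w → ∀ q : SetPartition n, q.parts = shiftParts v w p → q ∈ A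

def Hfam (n t i : ℕ) : Finset (Finset (Fin n)) :=
  Finset.univ.filter (fun H : Finset (Fin n) =>
    (H ⊆ Finset.univ.filter (fun x : Fin n => x.val < t + i) ∧ H.card = t + 1 ∧
      Finset.univ.filter (fun x : Fin n => x.val < t) ⊆ H) ∨
    (H ⊆ Finset.univ.filter (fun x : Fin n => x.val < t + i) ∧ H.card = t + i - 1 ∧
      Finset.univ.filter (fun x : Fin n => t ≤ x.val ∧ x.val < t + i) ⊆ H))

def upset (n : ℕ) (C : Finset (Finset (Fin n))) : Finset (Finset (Fin n)) :=
  Finset.univ.filter (fun S => ∃ c ∈ C, c ⊆ S)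

noncomputable def nu (n t i : ℕ) : ℕ :=
  ∑ S ∈ upset n (Hfam n t i), Btilde (n - S.card)

def minFixedSets {n : ℕ} (A : Set (SetPartition n)) : Set (Finset (Fin n)) :=
  {E | (∃ p ∈ A, fixedSet p = E) ∧ ∀ p ∈ A, fixedSet p ⊆ E → fixedSet p = E}

noncomputable def splus {n : ℕ} (A : Set (SetPartition n)) : ℕ :=
  sSup {m : ℕ | ∃ E ∈ minFixedSets A, m = E.sup (fun x => x.val + 1)}


noncomputable def hR (m : ℕ) : ℝ := ∑' i : ℕ, (i:ℝ)^m / (Nat.factorial i)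
noncomputable def gR (m : ℕ) : ℝ := ∑' i : ℕ, ((i:ℝ)-1)^m / (Nat.factorial i)

lemma shift_term (m i : ℕ) : ((i+1:ℕ):ℝ)^(m+1) / (Nat.factorial (i+1) : ℝ) =
    ∑ r ∈ Finset.range (m+1), (m.choose r : ℝ) * ((i:ℝ)^r / (Nat.factorial i)) := by
  have h0 : ((i:ℝ)+1) ≠ 0 := by positivity
  have hfac : (Nat.factorial (i+1) : ℝ) = ((i:ℝ)+1) * (Nat.factorial i : ℝ) := by
    rw [Nat.factorial_succ]; push_cast; ring
  have h1 : ((i+1:ℕ):ℝ)^(m+1) / (Nat.factorial (i+1) : ℝ)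
      = ((i:ℝ)+1)^m / (Nat.factorial i : ℝ) := by
    push_cast
    rw [hfac, pow_succ, mul_comm (((i:ℝ)+1)) ((Nat.factorial i : ℝ)),
      mul_div_mul_right _ _ h0]
  rw [h1]
  have h2 : ((i:ℝ)+1)^m = ∑ r ∈ Finset.range (m+1), (m.choose r : ℝ) * (i:ℝ)^r := by
    rw [add_pow]
    apply Finset.sum_congr rfl
    intro r _
    ring
  rw [h2, Finset.sum_div]
  apply Finset.sum_congr rfl
  intro r _
  ring

lemma summable_H (m : ℕ) : Summable (fun i : ℕ => (i:ℝ)^m / (Nat.factorial i)) := by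
  induction m using Nat.strong_induction_on with
  | _ m ih =>
    match m with
    | 0 => simpa using Real.summable_pow_div_factorial 1
    | (m+1) =>
      rw [← summable_nat_add_iff 1]
      have heq : (fun i : ℕ => ((i+1 : ℕ):ℝ)^(m+1) / (Nat.factorial (i+1) : ℝ)) =
          fun i : ℕ => ∑ r ∈ Finset.range (m+1), (m.choose r : ℝ) * ((i:ℝ)^r / (Nat.factorial i)) := by
        funext i; exact shift_term m i
      simp only [Nat.cast_add, Nat.cast_one] at heq ⊢
      rw [heq]
      exact summable_sum (fun r hr => ((ih r (Finset.mem_range.mp hr)).mul_left _))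

lemma summable_G (m : ℕ) : Summable (fun i : ℕ => ((i:ℝ)-1)^m / (Nat.factorial i)) := by
  rw [← summable_nat_add_iff 1]
  apply Summable.of_nonneg_of_le (f := fun i : ℕ => (i:ℝ)^m / (Nat.factorial i))
  · intro i
    push_cast
    rw [add_sub_cancel_right]
    positivity
  · intro i
    push_cast
    rw [add_sub_cancel_right]
    gcongr
    exact_mod_cast Nat.le_succ i
  · exact summable_H m

lemma summable_G' (m : ℕ) : Summable (fun i : ℕ => ((i:ℝ)-1)^m * i / (Nat.factorial i)) := by
  rw [← summable_nat_add_iff 1]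
  have heq : (fun i : ℕ => (((i+1:ℕ):ℝ)-1)^m * ((i+1:ℕ):ℝ) / (Nat.factorial (i+1)))
      = fun i : ℕ => (i:ℝ)^m / (Nat.factorial i) := by
    funext i
    have h0 : ((i:ℝ)+1) ≠ 0 := by positivity
    rw [Nat.factorial_succ]
    push_cast
    rw [add_sub_cancel_right]
    rw [mul_comm ((i:ℝ)+1) ((Nat.factorial i : ℝ)), mul_div_mul_right _ _ h0]
  simp only [Nat.cast_add, Nat.cast_one] at heq ⊢
  rw [heq]
  exact summable_H m

lemma tsum_G' (m : ℕ) : ∑' i : ℕ, ((i:ℝ)-1)^m * i / (Nat.factorial i) = hR m := by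
  rw [Summable.tsum_eq_zero_add (summable_G' m)]
  norm_num
  rw [hR]
  apply tsum_congr
  intro i
  have hne : ((i:ℝ)+1) ≠ 0 := by positivity
  rw [Nat.factorial_succ]
  push_cast
  have hfac : (Nat.factorial i : ℝ) ≠ 0 := by exact_mod_cast (Nat.factorial_ne_zero i)
  field_simp

lemma gR_succ (m : ℕ) : gR (m+1) = hR m - gR m := by
  have heq : (fun i : ℕ => ((i:ℝ)-1)^(m+1) / (Nat.factorial i))
      = fun i : ℕ => ((i:ℝ)-1)^m * i / (Nat.factorial i) - ((i:ℝ)-1)^m / (Nat.factorial i) := by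
    funext i
    rw [pow_succ, ← sub_div]
    congr 1
    ring
  rw [gR, heq, Summable.tsum_sub (summable_G' m) (summable_G m), tsum_G']
  rfl

lemma hR_eq_sum_gR (m : ℕ) :
    hR m = ∑ k ∈ Finset.range (m+1), (m.choose k : ℝ) * gR k := by
  have heq : (fun i : ℕ => (i:ℝ)^m / (Nat.factorial i))
      = fun i : ℕ => ∑ k ∈ Finset.range (m+1),
          (m.choose k : ℝ) * (((i:ℝ)-1)^k / (Nat.factorial i)) := by
    funext i
    have h2 : (i:ℝ)^m = ∑ k ∈ Finset.range (m+1), (m.choose k : ℝ) * ((i:ℝ)-1)^k := by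
      have := add_pow ((i:ℝ)-1) 1 m
      simp only [sub_add_cancel, one_pow, mul_one] at this
      rw [this]
      apply Finset.sum_congr rfl
      intro k _
      ring
    rw [h2, Finset.sum_div]
    apply Finset.sum_congr rfl
    intro k _
    ring
  rw [hR, heq, Summable.tsum_finsetSum (fun k _ => (summable_G k).mul_left _)]
  apply Finset.sum_congr rfl
  intro k _
  rw [gR, tsum_mul_left]

lemma gR_zero : gR 0 = Real.exp 1 := by
  rw [Real.exp_eq_exp_ℝ, NormedSpace.exp_eq_tsum_div, gR]
  simp

lemma gR_pos_exp : Real.exp 1 ≠ 0 := Real.exp_ne_zero 1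

variable {α β : Type*} [DecidableEq α] [DecidableEq β]

/-- map a finpartition along an embedding -/
def pmap (f : α ↪ β) {s : Finset α} (P : Finpartition s) : Finpartition (s.map f) where
  parts := P.parts.image (Finset.map f)
  supIndep := by
    rw [Finset.supIndep_iff_pairwiseDisjoint]
    rintro b hb c hc hbc
    simp only [Finset.coe_image, Set.mem_image, Finset.mem_coe] at hb hc
    obtain ⟨b, hb, rfl⟩ := hb
    obtain ⟨c, hc, rfl⟩ := hc
    have hne : b ≠ c := by rintro rfl; exact hbc rfl
    exact (Finset.disjoint_map f).mpr (P.disjoint hb hc hne)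
  sup_parts := by
    ext x
    simp only [Finset.mem_sup, Finset.mem_image, id_eq, Finset.mem_map]
    constructor
    · rintro ⟨v, ⟨b, hb, rfl⟩, hx⟩
      rcases Finset.mem_map.mp hx with ⟨a, ha, rfl⟩
      exact ⟨a, P.le hb ha, rfl⟩
    · rintro ⟨a, ha, rfl⟩
      rw [← P.sup_parts] at ha
      rcases Finset.mem_sup.mp ha with ⟨b, hb, hab⟩
      exact ⟨b.map f, ⟨b, hb, rfl⟩, Finset.mem_map_of_mem f hab⟩
  bot_notMem := by
    simp only [Finset.bot_eq_empty, Finset.mem_image]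
    rintro ⟨b, hb, hb0⟩
    exact P.ne_bot hb (by rwa [Finset.map_eq_empty] at hb0)

lemma pmap_parts (f : α ↪ β) {s : Finset α} (P : Finpartition s) :
    (pmap f P).parts = P.parts.image (Finset.map f) := rfl

lemma map_preimage_of_parts (f : α ↪ β) {s : Finset α} (Q : Finpartition (s.map f))
    {b : Finset β} (hb : b ∈ Q.parts) :
    (b.preimage f f.injective.injOn).map f = b := by
  ext x
  simp only [Finset.mem_map, Finset.mem_preimage]
  constructor
  · rintro ⟨a, ha, rfl⟩; exact ha
  · intro hx
    have hxs : x ∈ s.map f := Q.le hb hx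
    rcases Finset.mem_map.mp hxs with ⟨a, _, rfl⟩
    exact ⟨a, hx, rfl⟩

/-- pull back a finpartition along an embedding -/
noncomputable def ppre (f : α ↪ β) {s : Finset α} (Q : Finpartition (s.map f)) : Finpartition s where
  parts := Q.parts.image (fun b => b.preimage f f.injective.injOn)
  supIndep := by
    rw [Finset.supIndep_iff_pairwiseDisjoint]
    rintro b hb c hc hbc
    simp only [Finset.coe_image, Set.mem_image, Finset.mem_coe] at hb hc
    obtain ⟨b, hb, rfl⟩ := hb
    obtain ⟨c, hc, rfl⟩ := hc
    have hne : b ≠ c := by rintro rfl; exact hbc rfl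
    have hd : Disjoint b c := Q.disjoint hb hc hne
    show Disjoint (b.preimage f f.injective.injOn) (c.preimage f f.injective.injOn)
    rw [Finset.disjoint_left]
    intro x hx1 hx2
    rw [Finset.mem_preimage] at hx1 hx2
    exact (Finset.disjoint_left.mp hd) hx1 hx2
  sup_parts := by
    ext x
    simp only [Finset.mem_sup, Finset.mem_image]
    constructor
    · rintro ⟨v, ⟨b, hb, rfl⟩, hx⟩
      rw [id_eq, Finset.mem_preimage] at hx
      have hxs : f x ∈ s.map f := Q.le hb hx
      rcases Finset.mem_map.mp hxs with ⟨a, ha, hfa⟩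
      rwa [← f.injective hfa]
    · intro hx
      have : f x ∈ s.map f := Finset.mem_map_of_mem f hx
      rw [← Q.sup_parts] at this
      rcases Finset.mem_sup.mp this with ⟨b, hb, hfb⟩
      exact ⟨b.preimage f f.injective.injOn, ⟨b, hb, rfl⟩, by
        rw [id_eq, Finset.mem_preimage]; exact hfb⟩
  bot_notMem := by
    simp only [Finset.bot_eq_empty, Finset.mem_image]
    rintro ⟨b, hb, hb0⟩
    apply Q.ne_bot hb
    have := map_preimage_of_parts f Q hb
    rw [hb0] at this
    simpa using this.symm

noncomputable def pEquiv (f : α ↪ β) (s : Finset α) : Finpartition s ≃ Finpartition (s.map f) where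
  toFun := pmap f
  invFun := ppre f
  left_inv P := by
    apply Finpartition.ext
    show (P.parts.image (Finset.map f)).image _ = P.parts
    rw [Finset.image_image]
    have : ∀ b ∈ P.parts, (Finset.preimage (Finset.map f b) f f.injective.injOn) = b := by
      intro b _
      exact Finset.preimage_map f b
    calc P.parts.image ((fun b => b.preimage f f.injective.injOn) ∘ Finset.map f)
        = P.parts.image id := Finset.image_congr (fun b hb => this b hb)
      _ = P.parts := Finset.image_id
  right_inv Q := by
    apply Finpartition.ext
    show (Q.parts.image _).image (Finset.map f) = Q.parts
    rw [Finset.image_image]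
    calc Q.parts.image (Finset.map f ∘ (fun b => b.preimage f f.injective.injOn))
        = Q.parts.image id := Finset.image_congr (fun b hb => map_preimage_of_parts f Q hb)
      _ = Q.parts := Finset.image_id

lemma ppre_pred (f : α ↪ β) {s : Finset α} (Q : Finpartition (s.map f)) :
    (∀ b ∈ (ppre f Q).parts, b.card ≠ 1) ↔ (∀ b ∈ Q.parts, b.card ≠ 1) := by
  constructor
  · intro h b hb
    have hmem : b.preimage f f.injective.injOn ∈ (ppre f Q).parts :=
      Finset.mem_image_of_mem _ hb
    intro hc
    apply h _ hmem
    have hmp := map_preimage_of_parts f Q hb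
    have : (b.preimage f f.injective.injOn).card = b.card := by
      rw [← hmp, Finset.card_map, hmp]
    rw [this, hc]
  · intro h b hb
    rcases Finset.mem_image.mp hb with ⟨c, hc, rfl⟩
    intro hcc
    apply h c hc
    have hmp := map_preimage_of_parts f Q hc
    rw [← hmp, Finset.card_map, hcc]

lemma card_SF_map (f : α ↪ β) (s : Finset α) :
    Nat.card {q : Finpartition (s.map f) // ∀ b ∈ q.parts, b.card ≠ 1}
      = Nat.card {q : Finpartition s // ∀ b ∈ q.parts, b.card ≠ 1} := by
  apply Nat.card_congr
  exact Equiv.subtypeEquiv (pEquiv f s).symm (fun Q => (ppre_pred f Q).symm)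

lemma card_SF (s : Finset α) :
    Nat.card {q : Finpartition s // ∀ b ∈ q.parts, b.card ≠ 1} = Btilde s.card := by
  classical
  let f : Fin s.card ↪ α := (s.equivFin.symm.toEmbedding).trans (Function.Embedding.subtype _)
  have hmap : (Finset.univ : Finset (Fin s.card)).map f = s := by
    show (Finset.univ : Finset (Fin s.card)).map
      ((s.equivFin.symm.toEmbedding).trans (Function.Embedding.subtype _)) = s
    rw [← Finset.map_map, Finset.map_univ_equiv]
    exact Finset.attach_map_val
  have h2 : Nat.card {q : Finpartition s // ∀ b ∈ q.parts, b.card ≠ 1}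
      = Nat.card {q : Finpartition ((Finset.univ : Finset (Fin s.card)).map f) //
          ∀ b ∈ q.parts, b.card ≠ 1} := by rw [hmap]
  rw [h2, card_SF_map]
  rfl

lemma avoid_parts_of_mem {s : Finset α} (p : Finpartition s) {B : Finset α} (hB : B ∈ p.parts) :
    (p.avoid B).parts = p.parts.erase B := by
  ext c
  rw [Finpartition.mem_avoid, Finset.mem_erase]
  constructor
  · rintro ⟨d, hd, hnle, rfl⟩
    have hdB : d ≠ B := by rintro rfl; exact hnle le_rfl
    have hdisj : Disjoint d B := p.disjoint hd hB hdB
    rw [Finset.sdiff_eq_self_iff_disjoint.mpr hdisj]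
    exact ⟨hdB, hd⟩
  · rintro ⟨hcB, hc⟩
    refine ⟨c, hc, ?_, Finset.sdiff_eq_self_iff_disjoint.mpr (p.disjoint hc hB hcB)⟩
    intro hle
    have hdj : Disjoint c B := p.disjoint hc hB hcB
    exact p.ne_bot hc (hdj.eq_bot_of_le hle)

lemma extend_avoid_parts {s : Finset α} (p : Finpartition s) {B : Finset α} (hB : B ∈ p.parts)
    (hb : B ≠ ⊥) (hab : Disjoint (s \ B) B) (hc : (s \ B) ⊔ B = s) :
    ((p.avoid B).extend hb hab hc).parts = p.parts := by
  rw [Finpartition.extend_parts, avoid_parts_of_mem p hB, Finset.insert_erase hB]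

lemma avoid_extend_parts {s B : Finset α} (q : Finpartition (s \ B))
    (hb : B ≠ ⊥) (hab : Disjoint (s \ B) B) (hc : (s \ B) ⊔ B = s) :
    ((q.extend hb hab hc).avoid B).parts = q.parts := by
  have hBmem : B ∈ (q.extend hb hab hc).parts := by
    rw [Finpartition.extend_parts]; exact Finset.mem_insert_self _ _
  rw [avoid_parts_of_mem _ hBmem, Finpartition.extend_parts]
  apply Finset.erase_insert
  intro hBq
  have hle := q.le hBq
  have hdj : Disjoint B (s \ B) := Finset.sdiff_disjoint.symm
  exact hb (hdj.eq_bot_of_le hle)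

set_option maxHeartbeats 1000000 in
lemma btilde_succ (n : ℕ) :
    Btilde (n+1) = ∑ S ∈ (((Finset.univ : Finset (Fin (n+1))).erase (Fin.last n)).powerset.filter
      (fun S => S.Nonempty)), Btilde (n - S.card) := by
  classical
  set ℓ := Fin.last n with hℓdef
  set T := (((Finset.univ : Finset (Fin (n+1))).erase ℓ).powerset.filter (fun S => S.Nonempty))
    with hTdef
  rw [Btilde, Nat.card_eq_fintype_card, ← Finset.card_univ]
  have hmapsto : ∀ p ∈ (Finset.univ : Finset {p : SetPartition (n+1) // ∀ b ∈ p.parts, b.card ≠ 1}),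
      (p.1.part ℓ).erase ℓ ∈ T := by
    intro p _
    have hpart : p.1.part ℓ ∈ p.1.parts := p.1.part_mem.mpr (Finset.mem_univ ℓ)
    have hℓmem : ℓ ∈ p.1.part ℓ := p.1.mem_part (Finset.mem_univ ℓ)
    rw [hTdef, Finset.mem_filter, Finset.mem_powerset]
    constructor
    · exact Finset.erase_subset_erase ℓ (Finset.subset_univ _)
    · have h1 : 1 ≤ (p.1.part ℓ).card := Finset.card_pos.mpr ⟨ℓ, hℓmem⟩
      have h2 : (p.1.part ℓ).card ≠ 1 := p.2 _ hpart
      rw [← Finset.card_pos, Finset.card_erase_of_mem hℓmem]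
      omega
  rw [Finset.card_eq_sum_card_fiberwise hmapsto]
  apply Finset.sum_congr rfl
  intro S hS
  rw [hTdef, Finset.mem_filter, Finset.mem_powerset] at hS
  obtain ⟨hSsub, hSne⟩ := hS
  have hℓS : ℓ ∉ S := fun h => (Finset.mem_erase.mp (hSsub h)).1 rfl
  set B := insert ℓ S with hBdef
  have hBcard : B.card = S.card + 1 := Finset.card_insert_of_notMem hℓS
  have hcompl : ((Finset.univ : Finset (Fin (n+1))) \ B).card = n - S.card := by
    rw [Finset.card_sdiff_of_subset (Finset.subset_univ B), Finset.card_univ, Fintype.card_fin, hBcard]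
    omega
  have hBne : B ≠ ⊥ := by
    rw [Finset.bot_eq_empty]
    exact Finset.insert_ne_empty _ _
  have hdisj : Disjoint ((Finset.univ : Finset (Fin (n+1))) \ B) B := Finset.sdiff_disjoint
  have hsup : ((Finset.univ : Finset (Fin (n+1))) \ B) ⊔ B = Finset.univ := by
    rw [Finset.sup_eq_union, Finset.sdiff_union_self_eq_union]
    exact Finset.union_eq_left.mpr (Finset.subset_univ B)
  have hBtilde : Btilde (n - S.card) = Fintype.card
      {q : Finpartition ((Finset.univ : Finset (Fin (n+1))) \ B) // ∀ b ∈ q.parts, b.card ≠ 1} := by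
    rw [← Nat.card_eq_fintype_card, card_SF, hcompl]
  rw [hBtilde, ← Finset.card_univ]
  refine Finset.card_bij'
    (fun p hp => ⟨p.1.avoid B, ?_⟩)
    (fun q _ => ⟨q.1.extend hBne hdisj hsup, ?_⟩)
    ?_ ?_ ?_ ?_
  · -- pred of avoid
    intro b hb
    have hfib : (p.1.part ℓ).erase ℓ = S := (Finset.mem_filter.mp hp).2
    have hℓmem : ℓ ∈ p.1.part ℓ := p.1.mem_part (Finset.mem_univ ℓ)
    have hBeq : B = p.1.part ℓ := by
      rw [hBdef, ← hfib, Finset.insert_erase hℓmem]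
    have hBmem : B ∈ p.1.parts := hBeq ▸ p.1.part_mem.mpr (Finset.mem_univ ℓ)
    rw [avoid_parts_of_mem p.1 hBmem] at hb
    exact p.2 _ (Finset.mem_of_mem_erase hb)
  · -- pred of extend
    intro b hb
    rw [Finpartition.extend_parts] at hb
    rcases Finset.mem_insert.mp hb with rfl | hb
    · rw [hBcard]
      have := hSne.card_pos
      omega
    · exact q.2 _ hb
  · -- hi
    intro p hp
    exact Finset.mem_univ _
  · -- membership of extend in fiber
    intro q hq
    have hpart : (q.1.extend hBne hdisj hsup).part ℓ = B := by
      apply Finpartition.part_eq_of_mem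
      · rw [Finpartition.extend_parts]; exact Finset.mem_insert_self _ _
      · exact Finset.mem_insert_self _ _
    rw [Finset.mem_filter]
    refine ⟨Finset.mem_univ _, ?_⟩
    rw [hpart, hBdef, Finset.erase_insert hℓS]
  · -- left inverse
    intro p hp
    apply Subtype.ext
    apply Finpartition.ext
    have hfib : (p.1.part ℓ).erase ℓ = S := (Finset.mem_filter.mp hp).2
    have hℓmem : ℓ ∈ p.1.part ℓ := p.1.mem_part (Finset.mem_univ ℓ)
    have hBeq : B = p.1.part ℓ := by
      rw [hBdef, ← hfib, Finset.insert_erase hℓmem]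
    have hBmem : B ∈ p.1.parts := hBeq ▸ p.1.part_mem.mpr (Finset.mem_univ ℓ)
    exact extend_avoid_parts p.1 hBmem hBne hdisj hsup
  · -- right inverse
    intro q hq
    apply Subtype.ext
    apply Finpartition.ext
    exact avoid_extend_parts q.1 hBne hdisj hsup

lemma btilde_zero : Btilde 0 = 1 := by
  have hparts : ∀ p : SetPartition 0, p.parts = ∅ := by
    intro p
    ext b
    simp only [Finset.notMem_empty, iff_false]
    intro hb
    apply p.ne_bot hb
    rw [Finset.bot_eq_empty]
    have h1 := p.le hb
    have h2 : (Finset.univ : Finset (Fin 0)) = ∅ := Finset.univ_eq_empty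
    exact Finset.subset_empty.mp (h2 ▸ h1)
  rw [Btilde, Nat.card_eq_fintype_card]
  apply Fintype.card_eq_one_iff.mpr
  refine ⟨⟨(⊥ : Finpartition (Finset.univ : Finset (Fin 0))), ?_⟩, ?_⟩
  · intro b hb
    rw [hparts] at hb
    exact absurd hb (Finset.notMem_empty b)
  · intro q
    apply Subtype.ext
    apply Finpartition.ext
    rw [hparts, hparts]

lemma btilde_rec (n : ℕ) :
    Btilde (n+1) + Btilde n = ∑ k ∈ Finset.range (n+1), n.choose k * Btilde (n - k) := by
  classical
  have htcard : ((Finset.univ : Finset (Fin (n+1))).erase (Fin.last n)).card = n := by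
    rw [Finset.card_erase_of_mem (Finset.mem_univ _), Finset.card_univ, Fintype.card_fin]
    omega
  have hempty : ((Finset.univ : Finset (Fin (n+1))).erase (Fin.last n)).powerset.filter
      (fun S => ¬ S.Nonempty) = {∅} := by
    ext S
    simp only [Finset.mem_filter, Finset.mem_powerset, Finset.not_nonempty_iff_eq_empty,
      Finset.mem_singleton]
    constructor
    · rintro ⟨_, h⟩; exact h
    · rintro rfl; exact ⟨Finset.empty_subset _, rfl⟩
  have hsplit := Finset.sum_filter_add_sum_filter_not
    ((Finset.univ : Finset (Fin (n+1))).erase (Fin.last n)).powerset (fun S => S.Nonempty)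
    (fun S => Btilde (n - S.card))
  calc Btilde (n+1) + Btilde n
      = (∑ S ∈ ((Finset.univ : Finset (Fin (n+1))).erase (Fin.last n)).powerset.filter
          (fun S => S.Nonempty), Btilde (n - S.card)) + Btilde n := by rw [btilde_succ]
    _ = ∑ S ∈ ((Finset.univ : Finset (Fin (n+1))).erase (Fin.last n)).powerset,
          Btilde (n - S.card) := by
        rw [← hsplit, hempty, Finset.sum_singleton, Finset.card_empty, Nat.sub_zero]
    _ = ∑ k ∈ Finset.range (((Finset.univ : Finset (Fin (n+1))).erase (Fin.last n)).card + 1),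
          (((Finset.univ : Finset (Fin (n+1))).erase (Fin.last n)).card).choose k •
            Btilde (n - k) :=
        Finset.sum_powerset_apply_card (f := fun k => Btilde (n - k))
          (x := (Finset.univ : Finset (Fin (n+1))).erase (Fin.last n))
    _ = ∑ k ∈ Finset.range (n+1), n.choose k * Btilde (n - k) := by
        rw [htcard]
        apply Finset.sum_congr rfl
        intros
        rw [smul_eq_mul]

lemma binom_aux (x : ℝ) (b : ℕ) :
    ∑ j ∈ Finset.range (b+1), (b.choose j : ℝ) * x^(b-j) = (x+1)^b := by
  rw [← Finset.sum_range_reflect, add_pow]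
  apply Finset.sum_congr rfl
  intro j hj
  have hj' : j ≤ b := Nat.lt_succ_iff.mp (Finset.mem_range.mp hj)
  have h1 : b + 1 - 1 - j = b - j := by omega
  rw [h1, Nat.choose_symm hj', Nat.sub_sub_self hj', one_pow, mul_one, mul_comm]

lemma btilde_eq (m : ℕ) : (Btilde m : ℝ) = (Real.exp 1)⁻¹ * gR m := by
  induction m using Nat.strong_induction_on with
  | _ m ih =>
    match m with
    | 0 =>
      rw [btilde_zero, gR_zero, inv_mul_cancel₀ (Real.exp_ne_zero 1), Nat.cast_one]
    | (m+1) =>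
      have hcomb := btilde_rec m
      have hcast : (Btilde (m+1) : ℝ)
          = (∑ k ∈ Finset.range (m+1), (m.choose k : ℝ) * (Btilde (m-k) : ℝ)) - Btilde m := by
        have h2 := congrArg (fun x : ℕ => (x : ℝ)) hcomb
        push_cast at h2
        linarith
      rw [hcast]
      have hIH : ∀ k ∈ Finset.range (m+1), (m.choose k : ℝ) * (Btilde (m-k):ℝ)
          = (Real.exp 1)⁻¹ * ((m.choose k : ℝ) * gR (m-k)) := by
        intro k _
        rw [ih (m-k) (by omega)]
        ring
      rw [Finset.sum_congr rfl hIH, ← Finset.mul_sum, ih m (by omega)]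
      have hrefl : ∑ k ∈ Finset.range (m+1), (m.choose k:ℝ) * gR (m-k)
          = ∑ k ∈ Finset.range (m+1), (m.choose k:ℝ) * gR k := by
        rw [← Finset.sum_range_reflect]
        apply Finset.sum_congr rfl
        intro k hk
        have hk' : k ≤ m := Nat.lt_succ_iff.mp (Finset.mem_range.mp hk)
        have h1 : m + 1 - 1 - k = m - k := by omega
        rw [h1, Nat.choose_symm hk', Nat.sub_sub_self hk']
      rw [hrefl, ← hR_eq_sum_gR, gR_succ]
      ring


/-- Binomial transform of singleton-free Bell numbers as an infinite series. -/
theorem btilde_binomial_series (a b : ℕ) :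
    ((∑ j ∈ Finset.range (b + 1), b.choose j * Btilde (a + b - j) : ℕ) : ℝ) =
      (Real.exp 1)⁻¹ * ∑' i : ℕ, ((i : ℝ) - 1) ^ a * (i : ℝ) ^ b / (Nat.factorial i) := by
  have hL : ((∑ j ∈ Finset.range (b + 1), b.choose j * Btilde (a + b - j) : ℕ) : ℝ)
      = ∑ j ∈ Finset.range (b+1), (Real.exp 1)⁻¹ * ((b.choose j : ℝ) * gR (a + (b - j))) := by
    push_cast
    apply Finset.sum_congr rfl
    intro j hj
    have hj' : j ≤ b := Nat.lt_succ_iff.mp (Finset.mem_range.mp hj)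
    have h1 : a + b - j = a + (b - j) := by omega
    rw [h1, btilde_eq]
    ring
  rw [hL, ← Finset.mul_sum]
  congr 1
  have hswap : ∑ j ∈ Finset.range (b+1), (b.choose j:ℝ) * gR (a+(b-j))
      = ∑' i : ℕ, ∑ j ∈ Finset.range (b+1),
          (b.choose j:ℝ) * (((i:ℝ)-1)^(a+(b-j)) / (Nat.factorial i)) := by
    rw [Summable.tsum_finsetSum (fun j _ => (summable_G _).mul_left _)]
    apply Finset.sum_congr rfl
    intro j _
    rw [gR, tsum_mul_left]
  rw [hswap]
  apply tsum_congr
  intro i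
  have hterm : ∀ j ∈ Finset.range (b+1),
      (b.choose j:ℝ) * (((i:ℝ)-1)^(a+(b-j)) / (Nat.factorial i))
        = (((i:ℝ)-1)^a * ((b.choose j:ℝ) * ((i:ℝ)-1)^(b-j))) / (Nat.factorial i) := by
    intro j _
    rw [pow_add]
    ring
  rw [Finset.sum_congr rfl hterm, ← Finset.sum_div, ← Finset.mul_sum, binom_aux]
  rw [sub_add_cancel]
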